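/- Let Ω ⊆ ℂ be an open set and let f be holomorphic on Ω with f'(z) ≠ 0 for all z ∈ Ω (f locally univalent). Define u : Ω → ℝ by u(z) = log( 8|f'(z)|² / (1 + |f(z)|²)² ). Then u is smooth on Ω and satisfies the Liouville equation Δu + e^u = 0 on Ω, where Δu = ∂²u/∂x² + ∂²u/∂y² is the Laplacian with respect to the real coordinates z = x + iy. -/

import Mathlib

open Complex Filter

private lemma line_hasDerivAt (g : ℂ → ℂ) (z v : ℂ) (t : ℝ)
    (hg : DifferentiableAt ℂ g (z + t*v)) :
    HasDerivAt (fun s : ℝ => g (z + s*v)) (v * deriv g (z + t*v)) t := by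
  have h1 : HasDerivAt (fun s : ℝ => z + (s:ℂ)*v) v t := by
    simpa using ((Complex.ofRealCLM.hasDerivAt.mul_const v).const_add z)
  have := hg.hasDerivAt.scomp t h1
  simp only [smul_eq_mul] at this
  exact this

private lemma normSq_line_hasDerivAt (g : ℂ → ℂ) (z v : ℂ) (c : ℝ) (t : ℝ)
    (hg : DifferentiableAt ℂ g (z + t*v)) :
    HasDerivAt (fun s : ℝ => c + normSq (g (z + s*v)))
      (2 * ((starRingEnd ℂ) (g (z+t*v)) * (v * deriv g (z+t*v))).re) t := by
  have hG := line_hasDerivAt g z v t hg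
  set G' := v * deriv g (z + t*v) with hG'
  have hre : HasDerivAt (fun s : ℝ => (g (z + s*v)).re) G'.re t :=
    Complex.reCLM.hasFDerivAt.comp_hasDerivAt t hG
  have him : HasDerivAt (fun s : ℝ => (g (z + s*v)).im) G'.im t :=
    Complex.imCLM.hasFDerivAt.comp_hasDerivAt t hG
  have h2 := ((hre.mul hre).add (him.mul him)).const_add c
  have e1 : (fun s : ℝ => c + normSq (g (z + s*v)))
      = fun s : ℝ => c + ((g (z + s*v)).re * (g (z + s*v)).re
          + (g (z + s*v)).im * (g (z + s*v)).im) := by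
    funext s; simp [Complex.normSq_apply]
  rw [e1]
  refine h2.congr_deriv ?_
  simp [Complex.mul_re, Complex.conj_re, Complex.conj_im]; ring

private lemma slice1 (g : ℂ → ℂ) (z v : ℂ) (c : ℝ) (t : ℝ)
    (hg : DifferentiableAt ℂ g (z + t*v)) (hpos : 0 < c + normSq (g (z + t*v))) :
    HasDerivAt (fun s : ℝ => Real.log (c + normSq (g (z + s*v))))
      (2 * ((starRingEnd ℂ) (g (z+t*v)) * (v * deriv g (z+t*v))).re
        / (c + normSq (g (z+t*v)))) t :=
  (normSq_line_hasDerivAt g z v c t hg).log (ne_of_gt hpos)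

private lemma slice2 (g : ℂ → ℂ) (z v : ℂ) (c : ℝ) (t : ℝ)
    (hg : DifferentiableAt ℂ g (z + t*v)) (hg2 : DifferentiableAt ℂ (deriv g) (z + t*v))
    (hpos : 0 < c + normSq (g (z + t*v))) :
    HasDerivAt (fun s : ℝ => 2 * ((starRingEnd ℂ) (g (z+s*v)) * (v * deriv g (z+s*v))).re
        / (c + normSq (g (z+s*v))))
      ((2 * (normSq (v * deriv g (z+t*v))
          + ((starRingEnd ℂ) (g (z+t*v)) * (v * (v * deriv (deriv g) (z+t*v)))).re)
            * (c + normSq (g (z+t*v)))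
        - (2 * ((starRingEnd ℂ) (g (z+t*v)) * (v * deriv g (z+t*v))).re)^2)
        / (c + normSq (g (z+t*v)))^2) t := by
  have hG := line_hasDerivAt g z v t hg
  set w := z + t*v
  set G' := v * deriv g w with hG'
  set B' := v * (v * deriv (deriv g) w) with hB'
  have hA : HasDerivAt (fun s : ℝ => (starRingEnd ℂ) (g (z + s*v))) ((starRingEnd ℂ) G') t := by
    have := Complex.conjCLE.toContinuousLinearMap.hasFDerivAt.comp_hasDerivAt t hG
    simp only [ContinuousLinearEquiv.coe_coe] at this
    exact this
  have hB : HasDerivAt (fun s : ℝ => v * deriv g (z + s*v)) B' t :=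
    (line_hasDerivAt (deriv g) z v t hg2).const_mul v
  have hAB := hA.mul hB
  have hNre : HasDerivAt
      (fun s : ℝ => ((starRingEnd ℂ) (g (z+s*v)) * (v * deriv g (z+s*v))).re)
      ((starRingEnd ℂ) G' * G' + (starRingEnd ℂ) (g w) * B').re t :=
    Complex.reCLM.hasFDerivAt.comp_hasDerivAt t hAB
  have hN := hNre.const_mul 2
  have hD := normSq_line_hasDerivAt g z v c t hg
  have := hN.div hD (ne_of_gt hpos)
  refine this.congr_deriv ?_
  have hre : ((starRingEnd ℂ) G' * G').re = normSq G' := by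
    rw [← Complex.normSq_eq_conj_mul_self]; simp
  rw [Complex.add_re, hre]
  ring

/-- second derivative of the slice of `u` in direction `v`. -/
private lemma slice_u (Ω : Set ℂ) (hΩ : IsOpen Ω) (f : ℂ → ℂ)
    (hf : DifferentiableOn ℂ f Ω) (hf' : ∀ z ∈ Ω, deriv f z ≠ 0)
    (u : ℂ → ℝ)
    (hu : ∀ z ∈ Ω, u z =
      Real.log (8 * ‖deriv f z‖ ^ 2 / (1 + ‖f z‖ ^ 2) ^ 2))
    (z : ℂ) (hz : z ∈ Ω) (v : ℂ) :
    deriv (deriv (fun t : ℝ => u (z + t*v))) 0 =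
      (2 * (normSq (v * deriv (deriv f) z)
          + ((starRingEnd ℂ) (deriv f z) * (v * (v * deriv (deriv (deriv f)) z))).re)
            * (0 + normSq (deriv f z))
        - (2 * ((starRingEnd ℂ) (deriv f z) * (v * deriv (deriv f) z)).re)^2)
        / (0 + normSq (deriv f z))^2
      - 2 * ((2 * (normSq (v * deriv f z)
          + ((starRingEnd ℂ) (f z) * (v * (v * deriv (deriv f) z))).re)
            * (1 + normSq (f z))
        - (2 * ((starRingEnd ℂ) (f z) * (v * deriv f z)).re)^2)
        / (1 + normSq (f z))^2) := by
  have hfa : AnalyticOnNhd ℂ f Ω := hf.analyticOnNhd hΩ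
  have hf1a : AnalyticOnNhd ℂ (deriv f) Ω := hfa.deriv
  have hf2a : AnalyticOnNhd ℂ (deriv (deriv f)) Ω := hf1a.deriv
  set S : Set ℝ := {t : ℝ | z + t*v ∈ Ω} with hS_def
  have hS : IsOpen S := by
    have : Continuous fun t : ℝ => z + (t:ℂ)*v := by continuity
    exact hΩ.preimage this
  have h0 : (0:ℝ) ∈ S := by simp [hS_def, hz]
  -- positivity on S
  have posA : ∀ t ∈ S, (0:ℝ) < 0 + normSq (deriv f (z + t*v)) := fun t ht => by
    simpa using Complex.normSq_pos.mpr (hf' _ ht)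
  have posB : ∀ t ∈ S, (0:ℝ) < 1 + normSq (f (z + t*v)) := fun t ht => by
    have := Complex.normSq_nonneg (f (z + t*v)); linarith
  -- u equals sum of logs on S
  have hEq : ∀ t ∈ S, u (z + t*v)
      = Real.log 8 + Real.log (0 + normSq (deriv f (z + t*v)))
        - 2 * Real.log (1 + normSq (f (z + t*v))) := by
    intro t ht
    have h8 : (0:ℝ) < 8 * normSq (deriv f (z + t*v)) := by
      have := posA t ht; linarith
    rw [hu _ ht, Complex.sq_norm, Complex.sq_norm,
      Real.log_div (by positivity) (by have := posB t ht; positivity),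
      Real.log_mul (by norm_num) (by have := posA t ht; simp only [zero_add] at this; exact ne_of_gt this),
      Real.log_pow]
    have := posA t ht
    simp only [zero_add]
    push_cast
    ring
  -- the first derivative function
  set d1 : ℝ → ℝ := fun s =>
    2 * ((starRingEnd ℂ) (deriv f (z+s*v)) * (v * deriv (deriv f) (z+s*v))).re
      / (0 + normSq (deriv f (z+s*v)))
    - 2 * (2 * ((starRingEnd ℂ) (f (z+s*v)) * (v * deriv f (z+s*v))).re
      / (1 + normSq (f (z+s*v)))) with hd1_def
  have hU : ∀ t ∈ S, HasDerivAt (fun s : ℝ => u (z + s*v)) (d1 t) t := by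
    intro t ht
    have hA := slice1 (deriv f) z v 0 t ((hf1a _ ht).differentiableAt) (posA t ht)
    have hB := slice1 f z v 1 t ((hfa _ ht).differentiableAt) (posB t ht)
    have base := ((hA.const_add (Real.log 8)).sub (hB.const_mul 2))
    exact base.congr_of_eventuallyEq
      (Filter.eventuallyEq_of_mem (hS.mem_nhds ht) fun s hs => hEq s hs)
  have hderiv_eq : deriv (fun s : ℝ => u (z + s*v)) =ᶠ[nhds 0] d1 :=
    Filter.eventually_of_mem (hS.mem_nhds h0) fun t ht => (hU t ht).deriv
  rw [hderiv_eq.deriv_eq]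
  have h2A := slice2 (deriv f) z v 0 0 ((hf1a _ h0).differentiableAt)
    ((hf2a _ h0).differentiableAt) (posA 0 h0)
  have h2B := slice2 f z v 1 0 ((hfa _ h0).differentiableAt)
    ((hf1a _ h0).differentiableAt) (posB 0 h0)
  have := (h2A.sub (h2B.const_mul 2)).deriv
  simp only [Complex.ofReal_zero, zero_mul, add_zero] at this
  rw [hd1_def]
  exact this

/-- The Laplacian `Δu = ∂²u/∂x² + ∂²u/∂y²` of a function `u : ℂ → ℝ`, computed as the sum
of the second derivatives along the two real coordinate directions `1` and `i`. -/
noncomputable def laplacian (u : ℂ → ℝ) (z : ℂ) : ℝ :=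
  deriv (deriv (fun x : ℝ => u (z + x))) 0 +
    deriv (deriv (fun y : ℝ => u (z + y * Complex.I))) 0

/-- **Liouville's formula.** If `f` is holomorphic and locally univalent on an open set
`Ω`, then `u = log(8|f'|²/(1+|f|²)²)` is smooth and solves `Δu + e^u = 0` on `Ω`. -/
theorem liouville_equation (Ω : Set ℂ) (hΩ : IsOpen Ω) (f : ℂ → ℂ)
    (hf : DifferentiableOn ℂ f Ω) (hf' : ∀ z ∈ Ω, deriv f z ≠ 0)
    (u : ℂ → ℝ)
    (hu : ∀ z ∈ Ω, u z =
      Real.log (8 * ‖deriv f z‖ ^ 2 / (1 + ‖f z‖ ^ 2) ^ 2)) :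
    ContDiffOn ℝ (⊤ : ℕ∞) u Ω ∧
      ∀ z ∈ Ω, laplacian u z + Real.exp (u z) = 0 := by
  have hfa : AnalyticOnNhd ℂ f Ω := hf.analyticOnNhd hΩ
  have hf1a : AnalyticOnNhd ℂ (deriv f) Ω := hfa.deriv
  have hns : ContDiff ℝ (⊤ : ℕ∞) (normSq : ℂ → ℝ) := by
    have e : (normSq : ℂ → ℝ)
        = fun w => Complex.reCLM w * Complex.reCLM w + Complex.imCLM w * Complex.imCLM w := by
      funext w; simp [Complex.normSq_apply]
    rw [e]
    exact (Complex.reCLM.contDiff.mul Complex.reCLM.contDiff).add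
      (Complex.imCLM.contDiff.mul Complex.imCLM.contDiff)
  constructor
  · have hG : ∀ z ∈ Ω, ContDiffAt ℝ (⊤ : ℕ∞)
        (fun w => Real.log (8 * normSq (deriv f w) / (1 + normSq (f w))^2)) z := by
      intro z hz
      have hfc : ContDiffAt ℝ (⊤ : ℕ∞) f z := ((hfa z hz).contDiffAt).restrict_scalars ℝ
      have hf1c : ContDiffAt ℝ (⊤ : ℕ∞) (deriv f) z :=
        ((hf1a z hz).contDiffAt).restrict_scalars ℝ
      have hposA : 0 < normSq (deriv f z) := Complex.normSq_pos.mpr (hf' z hz)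
      have hposB : 0 < 1 + normSq (f z) := by
        have := Complex.normSq_nonneg (f z); linarith
      have hnum : ContDiffAt ℝ (⊤ : ℕ∞) (fun w => 8 * normSq (deriv f w)) z :=
        contDiffAt_const.mul (hns.contDiffAt.comp z hf1c)
      have hden : ContDiffAt ℝ (⊤ : ℕ∞) (fun w => (1 + normSq (f w))^2) z :=
        (contDiffAt_const.add (hns.contDiffAt.comp z hfc)).pow 2
      have hdiv := hnum.div hden (by positivity)
      exact hdiv.log (div_pos (by linarith) (pow_pos hposB 2)).ne'
    have hGon : ContDiffOn ℝ (⊤ : ℕ∞)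
        (fun w => Real.log (8 * normSq (deriv f w) / (1 + normSq (f w))^2)) Ω :=
      fun z hz => (hG z hz).contDiffWithinAt
    exact hGon.congr fun z hz => by
      rw [hu z hz, Complex.sq_norm, Complex.sq_norm]
  · intro z hz
    have h1 := slice_u Ω hΩ f hf hf' u hu z hz 1
    have h2 := slice_u Ω hΩ f hf hf' u hu z hz Complex.I
    have e1 : (fun x : ℝ => u (z + (x:ℂ))) = (fun x : ℝ => u (z + (x:ℂ)*1)) := by
      funext x; rw [mul_one]
    have hposA : 0 < normSq (deriv f z) := Complex.normSq_pos.mpr (hf' z hz)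
    have hposB : 0 < 1 + normSq (f z) := by
      have := Complex.normSq_nonneg (f z); linarith
    have hexp : Real.exp (u z) = 8 * normSq (deriv f z) / (1 + normSq (f z))^2 := by
      rw [hu z hz, Complex.sq_norm, Complex.sq_norm]
      exact Real.exp_log (div_pos (by linarith) (pow_pos hposB 2))
    unfold laplacian
    rw [e1, h1, h2, hexp]
    have hD1 : (deriv f z).re * (deriv f z).re + (deriv f z).im * (deriv f z).im ≠ 0 := by
      rw [← Complex.normSq_apply]; exact ne_of_gt hposA
    have hD2 : 1 + ((f z).re * (f z).re + (f z).im * (f z).im) ≠ 0 := by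
      rw [← Complex.normSq_apply]; exact ne_of_gt hposB
    simp only [Complex.normSq_apply, Complex.mul_re, Complex.mul_im, Complex.conj_re,
      Complex.conj_im, Complex.I_re, Complex.I_im, Complex.one_re, Complex.one_im,
      one_mul, mul_one, zero_mul, mul_zero, zero_add, add_zero, zero_sub, sub_zero, neg_neg,
      neg_mul, mul_neg]
    field_simp
    ring
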